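/- arXiv:2106.10172 — 2 statements merged into one kernel-verified Lean document; each statement's English description precedes it below -/
import Mathlib

section
/- Let G be a group and K ≤ G a subgroup. Then for all g, γ ∈ G: ‖gγ‖_K ≤ ‖g‖_K + ‖γ‖_K, ‖g⁻¹‖_K = ‖g‖_K, and ‖g^γ‖_K = ‖g‖_K (conjugation invariance). Consequently, Core_∅(K) = {g ∈ G : ‖g‖_K < ∞} is a normal subgroup of G. -/
open Filter MeasureTheory
open scoped ENNReal Topology

noncomputable section

namespace Paper

variable {G : Type*} [Group G]

/-- Conjugation on subgroups: `conjSubgroup g K = g K g⁻¹`. -/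
def conjSubgroup (g : G) (K : Subgroup G) : Subgroup G :=
  K.map (MulAut.conj g).toMonoidHom

lemma mem_conjSubgroup {g x : G} {K : Subgroup G} :
    x ∈ conjSubgroup g K ↔ g⁻¹ * x * g ∈ K := by
  constructor
  · rintro ⟨y, hy, rfl⟩
    simpa [MulAut.conj_apply, mul_assoc] using hy
  · intro h
    exact ⟨g⁻¹ * x * g, h, by simp [MulAut.conj_apply]; group⟩

lemma conjSubgroup_conjSubgroup (a b : G) (K : Subgroup G) :
    conjSubgroup a (conjSubgroup b K) = conjSubgroup (a * b) K := by
  ext x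
  simp only [mem_conjSubgroup]
  have e : b⁻¹ * (a⁻¹ * x * a) * b = (a * b)⁻¹ * x * (a * b) := by group
  rw [e]

lemma conjSubgroup_eq_of_mem_normalizer {n : G} {K : Subgroup G}
    (hn : n ∈ (Subgroup.normalizer (K : Set G))) : conjSubgroup n K = K := by
  ext x
  rw [mem_conjSubgroup]
  exact (Subgroup.mem_normalizer_iff''.mp hn x).symm

/-- `Θ = Θ_G(K)`: the set of right cosets of the normalizer of `K` in `G`. -/
abbrev NormCoset (K : Subgroup G) := Quotient (QuotientGroup.rightRel (Subgroup.normalizer (K : Set G)))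

/-- The conjugate `K^θ = g⁻¹ K g` for `θ = N_G(K)·g ∈ Θ` (it does not depend on the
chosen representative of the coset). -/
def conjCoset (K : Subgroup G) (θ : NormCoset K) : Subgroup G :=
  conjSubgroup θ.out⁻¹ K

lemma conjSubgroup_inv_eq_of_rel {a b : G} {K : Subgroup G}
    (h : QuotientGroup.rightRel (Subgroup.normalizer (K : Set G)) a b) :
    conjSubgroup a⁻¹ K = conjSubgroup b⁻¹ K := by
  rw [QuotientGroup.rightRel_apply] at h
  have e : conjSubgroup a⁻¹ K = conjSubgroup (b⁻¹ * (b * a⁻¹)) K := by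
    congr 1; group
  rw [e, ← conjSubgroup_conjSubgroup, conjSubgroup_eq_of_mem_normalizer h]

lemma conjCoset_mk (K : Subgroup G) (a : G) :
    conjCoset K (Quotient.mk (QuotientGroup.rightRel (Subgroup.normalizer (K : Set G))) a) =
      conjSubgroup a⁻¹ K := by
  apply conjSubgroup_inv_eq_of_rel
  exact Quotient.mk_out (s := QuotientGroup.rightRel (Subgroup.normalizer (K : Set G))) a

/-- The right action of `G` on `Θ`. -/
def shift (K : Subgroup G) (θ : NormCoset K) (g : G) : NormCoset K :=
  Quotient.mk (QuotientGroup.rightRel (Subgroup.normalizer (K : Set G))) (θ.out * g)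

lemma rel_mul {K : Subgroup G} {a b : G} (h : QuotientGroup.rightRel (Subgroup.normalizer (K : Set G)) a b)
    (g : G) : QuotientGroup.rightRel (Subgroup.normalizer (K : Set G)) (a * g) (b * g) := by
  rw [QuotientGroup.rightRel_apply] at h ⊢
  have e : b * g * (a * g)⁻¹ = b * a⁻¹ := by group
  rw [e]; exact h

lemma shift_mk (K : Subgroup G) (a g : G) :
    shift K (Quotient.mk (QuotientGroup.rightRel (Subgroup.normalizer (K : Set G))) a) g =
      Quotient.mk (QuotientGroup.rightRel (Subgroup.normalizer (K : Set G))) (a * g) := by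
  apply Quotient.sound
  exact rel_mul (Quotient.mk_out (s := QuotientGroup.rightRel (Subgroup.normalizer (K : Set G))) a) g

lemma shift_shift (K : Subgroup G) (θ : NormCoset K) (g h : G) :
    shift K (shift K θ g) h = shift K θ (g * h) := by
  induction θ using Quotient.inductionOn with
  | h a => rw [shift_mk, shift_mk, shift_mk, mul_assoc]

lemma shift_one (K : Subgroup G) (θ : NormCoset K) : shift K θ 1 = θ := by
  induction θ using Quotient.inductionOn with
  | h a => rw [shift_mk, mul_one]

lemma shift_injective (K : Subgroup G) (g : G) :
    Function.Injective (fun θ : NormCoset K => shift K θ g) := by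
  intro θ₁ θ₂ h
  have h2 := congrArg (fun θ : NormCoset K => shift K θ g⁻¹) h
  simpa [shift_shift, shift_one] using h2

lemma conjCoset_shift (K : Subgroup G) (θ : NormCoset K) (g : G) :
    conjCoset K (shift K θ g) = conjSubgroup g⁻¹ (conjCoset K θ) := by
  induction θ using Quotient.inductionOn with
  | h a =>
    rw [shift_mk, conjCoset_mk, conjCoset_mk, conjSubgroup_conjSubgroup]
    congr 1
    group

/-- `‖g‖_K = #{θ ∈ Θ : g ∉ K^θ} ∈ ℕ ∪ {∞}`. -/
def normOf (K : Subgroup G) (g : G) : ℕ∞ :=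
  {θ : NormCoset K | g ∉ conjCoset K θ}.encard

/-- `Core_∅(K) = {g : ‖g‖_K < ∞}`, as a subgroup of `G`. -/
def emptyCore (K : Subgroup G) : Subgroup G where
  carrier := {g | normOf K g < ⊤}
  one_mem' := by
    have h : {θ : NormCoset K | (1 : G) ∉ conjCoset K θ} = ∅ := by
      ext θ; simp [Subgroup.one_mem]
    simp [normOf, Set.mem_setOf_eq, h]
  mul_mem' := by
    intro a b ha hb
    simp only [Set.mem_setOf_eq, normOf] at ha hb ⊢
    have hsub : {θ : NormCoset K | a * b ∉ conjCoset K θ} ⊆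
        {θ : NormCoset K | a ∉ conjCoset K θ} ∪ {θ : NormCoset K | b ∉ conjCoset K θ} := by
      intro θ hθ
      by_contra hc
      simp only [Set.mem_union, Set.mem_setOf_eq, not_or, not_not] at hc
      exact hθ (mul_mem hc.1 hc.2)
    calc {θ : NormCoset K | a * b ∉ conjCoset K θ}.encard
        ≤ ({θ : NormCoset K | a ∉ conjCoset K θ} ∪
            {θ : NormCoset K | b ∉ conjCoset K θ}).encard := Set.encard_mono hsub
      _ ≤ _ + _ := Set.encard_union_le _ _
      _ < ⊤ := WithTop.add_lt_top.mpr ⟨ha, hb⟩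
  inv_mem' := by
    intro a ha
    have h : {θ : NormCoset K | a⁻¹ ∉ conjCoset K θ} =
        {θ : NormCoset K | a ∉ conjCoset K θ} := by
      ext θ; simp
    simpa only [Set.mem_setOf_eq, normOf, h] using ha

lemma mem_emptyCore {K : Subgroup G} {g : G} :
    g ∈ emptyCore K ↔ normOf K g < ⊤ := Iff.rfl

/-- `Core_∅(K)` is a normal subgroup of `G`. -/
instance emptyCore_normal (K : Subgroup G) : (emptyCore K).Normal := by
  constructor
  intro n hn g
  rw [mem_emptyCore] at hn ⊢
  rw [normOf, Set.encard_lt_top_iff] at hn ⊢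
  have hset : {θ : NormCoset K | g * n * g⁻¹ ∉ conjCoset K θ} =
      (fun θ : NormCoset K => shift K θ g) ⁻¹' {θ : NormCoset K | n ∉ conjCoset K θ} := by
    ext θ
    simp only [Set.mem_setOf_eq, Set.mem_preimage, conjCoset_shift, mem_conjSubgroup]
    have e : g⁻¹⁻¹ * n * g⁻¹ = g * n * g⁻¹ := by group
    rw [e]
  rw [hset]
  exact Set.Finite.preimage (Set.injOn_of_injective (shift_injective K g)) hn

/-- The properties of the "norm" `‖g‖_K = #{θ ∈ Θ : g ∉ K^θ}`: subadditivity,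
symmetry under inversion, and conjugation invariance; consequently
`Core_∅(K) = {g : ‖g‖_K < ∞}` is a normal subgroup of `G`. -/
theorem normOf_properties {G : Type*} [Group G] (K : Subgroup G) :
    (∀ g γ : G, normOf K (g * γ) ≤ normOf K g + normOf K γ) ∧
    (∀ g : G, normOf K g⁻¹ = normOf K g) ∧
    (∀ g γ : G, normOf K (γ⁻¹ * g * γ) = normOf K g) ∧
    ∃ H : Subgroup G, H.Normal ∧ (H : Set G) = {g : G | normOf K g < ⊤} := by
  refine ⟨?_, ?_, ?_, emptyCore K, emptyCore_normal K, rfl⟩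
  · intro a b
    have hsub : {θ : NormCoset K | a * b ∉ conjCoset K θ} ⊆
        {θ : NormCoset K | a ∉ conjCoset K θ} ∪ {θ : NormCoset K | b ∉ conjCoset K θ} := by
      intro θ hθ
      by_contra hc
      simp only [Set.mem_union, Set.mem_setOf_eq, not_or, not_not] at hc
      exact hθ (mul_mem hc.1 hc.2)
    calc {θ : NormCoset K | a * b ∉ conjCoset K θ}.encard
        ≤ ({θ : NormCoset K | a ∉ conjCoset K θ} ∪
            {θ : NormCoset K | b ∉ conjCoset K θ}).encard := Set.encard_mono hsub
      _ ≤ _ + _ := Set.encard_union_le _ _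
  · intro g
    have h : {θ : NormCoset K | g⁻¹ ∉ conjCoset K θ} =
        {θ : NormCoset K | g ∉ conjCoset K θ} := by
      ext θ; simp
    rw [normOf, normOf, h]
  · intro g γ
    have hmem : ∀ θ : NormCoset K,
        γ⁻¹ * g * γ ∉ conjCoset K θ ↔ g ∉ conjCoset K (shift K θ γ⁻¹) := by
      intro θ
      rw [conjCoset_shift, mem_conjSubgroup]
      simp
    have hset : {θ : NormCoset K | γ⁻¹ * g * γ ∉ conjCoset K θ} =
        (fun θ : NormCoset K => shift K θ γ) '' {θ : NormCoset K | g ∉ conjCoset K θ} := by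
      ext θ
      rw [Set.mem_setOf_eq, hmem θ, Set.mem_image]
      constructor
      · intro h
        exact ⟨shift K θ γ⁻¹, h, by simp [shift_shift, shift_one]⟩
      · rintro ⟨σ, hσ, rfl⟩
        simpa [shift_shift, shift_one] using hσ
    rw [normOf, normOf, hset, (shift_injective K γ).encard_image _]

end Paper
end
end

section
/- Let G be a group, F ⊴ G a normal subgroup of finite index [G:F] < ∞, and K ≤ F a subgroup. If the quotient F / Core_∅^F(K) is nilpotent, then G / Core_∅^G(K) is virtually nilpotent (i.e., has a nilpotent subgroup of finite index). -/
open Filter MeasureTheory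
open scoped ENNReal Topology

noncomputable section

namespace Paper

variable {G : Type*} [Group G]

lemma lcs_map_surj {G : Type*} [Group G] {H : Type*} [Group H] (f : G →* H)
    (hf : Function.Surjective f) (n : ℕ) :
    Subgroup.map f (Subgroup.lowerCentralSeries (⊤ : Subgroup G) n) = Subgroup.lowerCentralSeries (⊤ : Subgroup H) n := by
  induction n with
  | zero => simpa using Subgroup.map_top_of_surjective f hf
  | succ n ih =>
      show Subgroup.map f ⁅Subgroup.lowerCentralSeries (⊤ : Subgroup G) n, ⊤⁆ = ⁅Subgroup.lowerCentralSeries (⊤ : Subgroup H) n, ⊤⁆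
      rw [Subgroup.map_commutator, ih, Subgroup.map_top_of_surjective f hf]

lemma coe_mem_normalizer {F K : Subgroup G} (hKF : K ≤ F) {f : F}
    (hf : f ∈ Subgroup.normalizer ((K.subgroupOf F : Subgroup F) : Set F)) : (f : G) ∈ Subgroup.normalizer (K : Set G) := by
  rw [Subgroup.mem_normalizer_iff] at hf ⊢
  intro y
  constructor
  · intro hy
    have hyF : y ∈ F := hKF hy
    have := (hf ⟨y, hyF⟩).mp (Subgroup.mem_subgroupOf.mpr hy)
    simpa [Subgroup.mem_subgroupOf] using this
  · intro hy
    have hyF : y ∈ F := by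
      have h1 : (f : G) * y * (f : G)⁻¹ ∈ F := hKF hy
      have := F.mul_mem (F.mul_mem (F.inv_mem f.2) h1) f.2
      simpa [mul_assoc] using this
    have := (hf ⟨y, hyF⟩).mpr (by simpa [Subgroup.mem_subgroupOf] using hy)
    simpa [Subgroup.mem_subgroupOf] using this

lemma mem_emptyCore_of_conj (F : Subgroup G) [F.Normal] [F.FiniteIndex]
    (K : Subgroup G) (hKF : K ≤ F) {g : G} (hg : g ∈ F)
    (hconj : ∀ x : G, ∀ hx : x * g * x⁻¹ ∈ F,
      (⟨x * g * x⁻¹, hx⟩ : F) ∈ emptyCore (K.subgroupOf F)) :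
    g ∈ emptyCore K := by
  classical
  rw [mem_emptyCore, normOf, Set.encard_lt_top_iff]
  set K' := K.subgroupOf F with hK'
  have hmem : ∀ θ : NormCoset K,
      θ.out * ((QuotientGroup.mk θ.out : G ⧸ F)).out⁻¹ ∈ F := by
    intro θ
    have h1 : (QuotientGroup.mk (θ.out * ((QuotientGroup.mk θ.out : G ⧸ F)).out⁻¹) : G ⧸ F) = 1 := by
      rw [QuotientGroup.mk_mul, QuotientGroup.mk_inv, QuotientGroup.out_eq']
      simp
    exact (QuotientGroup.eq_one_iff _).mp h1
  let fel : NormCoset K → F :=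
    fun θ => ⟨θ.out * ((QuotientGroup.mk θ.out : G ⧸ F)).out⁻¹, hmem θ⟩
  let ψ : NormCoset K → (G ⧸ F) × NormCoset K' :=
    fun θ => (QuotientGroup.mk θ.out,
      Quotient.mk (QuotientGroup.rightRel (Subgroup.normalizer (K' : Set F))) (fel θ))
  have hinj : Function.Injective ψ := by
    intro θ₁ θ₂ h
    have h1 : (QuotientGroup.mk θ₁.out : G ⧸ F) = QuotientGroup.mk θ₂.out :=
      congrArg Prod.fst h
    have h2 := congrArg Prod.snd h
    have hrel : (fel θ₂) * (fel θ₁)⁻¹ ∈ Subgroup.normalizer (K' : Set F) :=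
      QuotientGroup.rightRel_apply.mp (Quotient.exact h2)
    have hnG : ((fel θ₂ : G)) * ((fel θ₁ : G))⁻¹ ∈ Subgroup.normalizer (K : Set G) := by
      have := coe_mem_normalizer hKF hrel
      simpa using this
    have key : θ₂.out * θ₁.out⁻¹ = (fel θ₂ : G) * (fel θ₁ : G)⁻¹ := by
      show θ₂.out * θ₁.out⁻¹ =
        θ₂.out * ((QuotientGroup.mk θ₂.out : G ⧸ F)).out⁻¹ *
          (θ₁.out * ((QuotientGroup.mk θ₁.out : G ⧸ F)).out⁻¹)⁻¹
      rw [h1]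
      group
    rw [← key] at hnG
    have : θ₁ = Quotient.mk (QuotientGroup.rightRel (Subgroup.normalizer (K : Set G))) θ₁.out :=
      (Quotient.out_eq θ₁).symm
    rw [this, ← Quotient.out_eq θ₂]
    exact Quotient.sound (QuotientGroup.rightRel_apply.mpr hnG)
  have hgqF : ∀ q : G ⧸ F, q.out * g * q.out⁻¹ ∈ F := fun q =>
    Subgroup.Normal.conj_mem ‹F.Normal› g hg q.out
  let T : G ⧸ F → Set (NormCoset K') :=
    fun q => {η | (⟨q.out * g * q.out⁻¹, hgqF q⟩ : F) ∉ conjCoset K' η}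
  have hTfin : ∀ q, (T q).Finite := by
    intro q
    have := hconj q.out (hgqF q)
    rw [mem_emptyCore, normOf, Set.encard_lt_top_iff] at this
    exact this
  have hcov : {θ : NormCoset K | g ∉ conjCoset K θ} ⊆
      ψ ⁻¹' (⋃ q : G ⧸ F, {q} ×ˢ T q) := by
    intro θ hθ
    simp only [Set.mem_preimage, Set.mem_iUnion]
    refine ⟨QuotientGroup.mk θ.out, rfl, ?_⟩
    show (⟨_, hgqF _⟩ : F) ∉ conjCoset K' (ψ θ).2
    intro hmem2
    apply hθ
    have e1 : conjCoset K' (ψ θ).2 = conjSubgroup (fel θ)⁻¹ K' := conjCoset_mk K' (fel θ)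
    rw [e1, mem_conjSubgroup] at hmem2
    simp only [inv_inv] at hmem2
    rw [Subgroup.mem_subgroupOf] at hmem2
    have e2 : ((fel θ : G)) *
        (((QuotientGroup.mk θ.out : G ⧸ F)).out * g * ((QuotientGroup.mk θ.out : G ⧸ F)).out⁻¹) *
        ((fel θ : G))⁻¹ = θ.out * g * θ.out⁻¹ := by
      show (θ.out * ((QuotientGroup.mk θ.out : G ⧸ F)).out⁻¹) * _ *
        (θ.out * ((QuotientGroup.mk θ.out : G ⧸ F)).out⁻¹)⁻¹ = _
      group
    rw [show ((fel θ) * ⟨_, hgqF (QuotientGroup.mk θ.out)⟩ * (fel θ)⁻¹ : F) =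
        ((fel θ) * ⟨_, hgqF (QuotientGroup.mk θ.out)⟩ * (fel θ)⁻¹ : F) from rfl] at hmem2
    have hmem3 : θ.out * g * θ.out⁻¹ ∈ K := by
      have : ((fel θ : G)) * ((QuotientGroup.mk θ.out : G ⧸ F)).out * g *
          ((QuotientGroup.mk θ.out : G ⧸ F)).out⁻¹ * ((fel θ : G))⁻¹ ∈ K := by
        simpa [mul_assoc] using hmem2
      rw [← e2]
      simpa [mul_assoc] using this
    show g ∈ conjSubgroup θ.out⁻¹ K
    rw [mem_conjSubgroup]
    simpa using hmem3
  have hU : (⋃ q : G ⧸ F, ({q} : Set (G ⧸ F)) ×ˢ T q).Finite :=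
    Set.finite_iUnion (fun q => (Set.finite_singleton q).prod (hTfin q))
  exact Set.Finite.subset
    (Set.Finite.preimage (Set.injOn_of_injective hinj) hU) hcov

/-- **Lemma 2.5.** Let `F ⊴ G` be a normal subgroup of finite index and `K ≤ F`.
If `F / Core_∅^F(K)` is nilpotent, then `G / Core_∅^G(K)` is virtually nilpotent. -/
theorem virtually_nilpotent_of_nilpotent_emptyCore {G : Type*} [Group G]
    (F : Subgroup G) [F.Normal] [F.FiniteIndex]
    (K : Subgroup G) (hKF : K ≤ F)
    (hnilp : Group.IsNilpotent (↥F ⧸ emptyCore (K.subgroupOf F))) :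
    ∃ H : Subgroup (G ⧸ emptyCore K), H.FiniteIndex ∧ Group.IsNilpotent ↥H := by
  classical
  obtain ⟨n, hn⟩ := nilpotent_iff_lowerCentralSeries.mp hnilp
  set C' := emptyCore (K.subgroupOf F) with hC'def
  have hC' : Subgroup.lowerCentralSeries (⊤ : Subgroup F) n ≤ C' := by
    have hmap := lcs_map_surj (QuotientGroup.mk' C')
      (QuotientGroup.mk'_surjective C') n
    rw [hn] at hmap
    rw [← QuotientGroup.ker_mk' C']
    exact (Subgroup.map_eq_bot_iff _).mp hmap
  have hcore : ∀ f : F, f ∈ Subgroup.lowerCentralSeries (⊤ : Subgroup F) n → (f : G) ∈ emptyCore K := by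
    intro f hf
    apply mem_emptyCore_of_conj F K hKF f.2
    intro x hx
    have h1 : MulAut.conjNormal x f ∈ Subgroup.lowerCentralSeries (⊤ : Subgroup F) n := by
      apply lowerCentralSeries.map (MulAut.conjNormal x).toMonoidHom n
      exact ⟨f, hf, rfl⟩
    have h2 := hC' h1
    have he : (⟨x * ↑f * x⁻¹, hx⟩ : F) = MulAut.conjNormal x f :=
      Subtype.ext (by simp [MulAut.conjNormal_apply])
    rw [he]
    exact h2
  set M := (emptyCore K).subgroupOf F with hMdef
  haveI : M.Normal := Subgroup.Normal.comap (emptyCore_normal K) F.subtype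
  have hMn : Subgroup.lowerCentralSeries (⊤ : Subgroup F) n ≤ M := fun f hf =>
    Subgroup.mem_subgroupOf.mpr (hcore f hf)
  have hQ : Group.IsNilpotent (↥F ⧸ M) := by
    rw [nilpotent_iff_lowerCentralSeries]
    refine ⟨n, ?_⟩
    rw [← lcs_map_surj (QuotientGroup.mk' M) (QuotientGroup.mk'_surjective M) n,
      Subgroup.map_eq_bot_iff, QuotientGroup.ker_mk']
    exact hMn
  set φ := (QuotientGroup.mk' (emptyCore K)).comp F.subtype with hφ
  have hker : φ.ker = M := by
    ext x
    simp [hφ, MonoidHom.mem_ker, hMdef, Subgroup.mem_subgroupOf,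
      QuotientGroup.eq_one_iff]
  have hrange : φ.range = F.map (QuotientGroup.mk' (emptyCore K)) := by
    rw [hφ, MonoidHom.range_comp, Subgroup.range_subtype]
  refine ⟨F.map (QuotientGroup.mk' (emptyCore K)), ?_, ?_⟩
  · constructor
    intro h0
    have hd := Subgroup.index_map_dvd (H := F)
      (QuotientGroup.mk'_surjective (emptyCore K))
    rw [h0] at hd
    exact Subgroup.FiniteIndex.index_ne_zero (H := F) (Nat.eq_zero_of_zero_dvd hd)
  · rw [← hrange]
    haveI : Group.IsNilpotent (↥F ⧸ φ.ker) :=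
      nilpotent_of_mulEquiv (QuotientGroup.quotientMulEquivOfEq hker.symm)
    exact nilpotent_of_mulEquiv (QuotientGroup.quotientKerEquivRange φ)


end Paper
end
end
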